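/- Suppose 1/n ≪ ε, c ≪ γ ≪ β ≪ β₂ ≪ β₁ ≪ 1 (nested-quantifier reading). Let H be a 4-graph on n vertices with δ(H) ≥ n/2 − εn and let {A,B} be a c-even-extremal bipartition of V(H). Then: (a) at most (c/(γ³ − 2ε))·C(n,2) pairs of vertices are not γ-good; (b) at most (c/(γ⁵ − 2ε))·n vertices are not γ-good; (c) at most (c/((1−β₁)(1/2 − β₂ − 2ε)))·n vertices are (β₁,β₂)-bad; (d) if R ⊆ V(H) satisfies |R| ≤ βn/3, then for every β-medium pair p₁ there exists a γ-good pair p₂ of vertices of V(H) ∖ R, disjoint from p₁, such that p₁ ∪ p₂ is an even edge of H. -/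

import Mathlib

open Finset

namespace HamiltonTwoCycles

/-- The number of edges of `E` containing the vertex set `S` (degree/codegree of `S`). -/
def deg {n : ℕ} (E : Finset (Finset (Fin n))) (S : Finset (Fin n)) : ℕ :=
  (E.filter fun e => S ⊆ e).card

/-- `E` is the edge set of a 4-uniform hypergraph on the vertex set `Fin n`. -/
def Is4Graph {n : ℕ} (E : Finset (Finset (Fin n))) : Prop :=
  ∀ e ∈ E, e.card = 4

/-- The minimum codegree of the 4-graph `E` is at least the real number `x`. -/
def MinCodegGE {n : ℕ} (E : Finset (Finset (Fin n))) (x : ℝ) : Prop :=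
  ∀ S : Finset (Fin n), S.card = 3 → x ≤ (deg E S : ℝ)

/-- The 4-graph `E` on `Fin n` contains a Hamilton 2-cycle: a cyclic ordering
`f 0, f 1, …, f (n-1)` of all vertices such that each of the `n/2` quadruples of four
cyclically consecutive vertices starting at an even position forms an edge. -/
def HamCycle2 (n : ℕ) (E : Finset (Finset (Fin n))) : Prop :=
  Even n ∧ ∃ f : ZMod n → Fin n, Function.Bijective f ∧
    ∀ j : ℕ, j < n / 2 →
      ({f (2*j), f (2*j+1), f (2*j+2), f (2*j+3)} : Finset (Fin n)) ∈ E

/-- `f 0, f 1, …, f (2ℓ+1)` is a 2-path of length `ℓ` in the 4-graph `E`: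
the vertices are distinct and each of the `ℓ` quadruples of consecutive vertices
starting at an even position forms an edge. -/
def IsPath2 (n : ℕ) (E : Finset (Finset (Fin n))) (ℓ : ℕ) (f : ℕ → Fin n) : Prop :=
  Set.InjOn f (Set.Iio (2*ℓ+2)) ∧
  ∀ j : ℕ, j < ℓ →
    ({f (2*j), f (2*j+1), f (2*j+2), f (2*j+3)} : Finset (Fin n)) ∈ E

/-- The vertex set of the 2-path of length `ℓ` described by `f`. -/
def pathVerts (n ℓ : ℕ) (f : ℕ → Fin n) : Finset (Fin n) :=
  (Finset.range (2*ℓ+2)).image f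

/-- The unordered pair of ends `{e₁, e₂}` equals the unordered pair `{q₁, q₂}`. -/
def EndsMatch {n : ℕ} (e₁ e₂ q₁ q₂ : Finset (Fin n)) : Prop :=
  (e₁ = q₁ ∧ e₂ = q₂) ∨ (e₁ = q₂ ∧ e₂ = q₁)

/-- The 4-graph `E` contains a Hamilton 2-path whose ends are `p₁` and `p₂`. -/
def HamPath2Ends (n : ℕ) (E : Finset (Finset (Fin n))) (p₁ p₂ : Finset (Fin n)) : Prop :=
  ∃ (ℓ : ℕ) (f : ℕ → Fin n), IsPath2 n E ℓ f ∧ pathVerts n ℓ f = Finset.univ ∧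
    EndsMatch {f 0, f 1} {f (2*ℓ), f (2*ℓ+1)} p₁ p₂

/-- The total 2-pathlength of the 4-graph `E` is at least `t`: there are vertex-disjoint
2-paths in `E` whose lengths sum to at least `t`. -/
def TotalPathlengthGE (n : ℕ) (E : Finset (Finset (Fin n))) (t : ℕ) : Prop :=
  ∃ (k : ℕ) (ℓ : ℕ → ℕ) (f : ℕ → ℕ → Fin n),
    (∀ i < k, IsPath2 n E (ℓ i) (f i)) ∧
    (∀ i < k, ∀ j < k, i ≠ j →
      Disjoint (pathVerts n (ℓ i) (f i)) (pathVerts n (ℓ j) (f j))) ∧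
    t ≤ ∑ i ∈ Finset.range k, ℓ i

/-- The odd edges of `E` with respect to the bipartition `{A, Aᶜ}`. -/
def oddEdges {n : ℕ} (E : Finset (Finset (Fin n))) (A : Finset (Fin n)) :
    Finset (Finset (Fin n)) :=
  E.filter fun e => Odd (e ∩ A).card

/-- The even edges of `E` with respect to the bipartition `{A, Aᶜ}`. -/
def evenEdges {n : ℕ} (E : Finset (Finset (Fin n))) (A : Finset (Fin n)) :
    Finset (Finset (Fin n)) :=
  E.filter fun e => Even (e ∩ A).card

/-- `p` is a split pair with respect to the bipartition `{A, Aᶜ}`. -/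
def SplitPair {n : ℕ} (A p : Finset (Fin n)) : Prop :=
  p.card = 2 ∧ (p ∩ A).card = 1

/-- `p` is a connate pair with respect to the bipartition `{A, Aᶜ}`. -/
def ConnatePair {n : ℕ} (A p : Finset (Fin n)) : Prop :=
  p.card = 2 ∧ (p ∩ A).card ≠ 1

/-- The bipartition `{A, Aᶜ}` of the vertex set of the 4-graph `E` is even-good. -/
def EvenGood (n : ℕ) (E : Finset (Finset (Fin n))) (A : Finset (Fin n)) : Prop :=
  (Even A.card ∨ A.card = Aᶜ.card) ∨
  (∃ e ∈ oddEdges E A, ∃ e' ∈ oddEdges E A,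
      e ∩ e' = ∅ ∨ SplitPair A (e ∩ e')) ∨
  (A.card = Aᶜ.card + 2 ∧ ∃ e ∈ oddEdges E A, ∃ e' ∈ oddEdges E A,
      (e ∩ e').card = 2 ∧ e ∩ e' ⊆ A) ∨
  (Aᶜ.card = A.card + 2 ∧ ∃ e ∈ oddEdges E A, ∃ e' ∈ oddEdges E A,
      (e ∩ e').card = 2 ∧ e ∩ e' ⊆ Aᶜ)

/-- The bipartition `{A, Aᶜ}` of the vertex set of the 4-graph `E` is odd-good. -/
def OddGood (n : ℕ) (E : Finset (Finset (Fin n))) (A : Finset (Fin n)) : Prop :=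
  ∃ m d : ℕ, (m = 0 ∨ m = 2 ∨ m = 4 ∨ m = 6) ∧ (d = 0 ∨ d = 2) ∧
    m % 8 = n % 8 ∧
    (d : ℤ) % 4 = ((A.card : ℤ) - (Aᶜ.card : ℤ)) % 4 ∧
    (((m = 0 ∧ d = 0) ∨ (m = 4 ∧ d = 2)) ∨
     (((m = 2 ∧ d = 2) ∨ (m = 6 ∧ d = 0)) ∧ (evenEdges E A).Nonempty) ∨
     (((m = 4 ∧ d = 0) ∨ (m = 0 ∧ d = 2)) ∧ TotalPathlengthGE n (evenEdges E A) 2) ∨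
     (((m = 6 ∧ d = 2) ∨ (m = 2 ∧ d = 0)) ∧
       ((∃ e ∈ evenEdges E A, (e ∩ A).card = 2 ∧ (e ∩ Aᶜ).card = 2) ∨
        TotalPathlengthGE n (evenEdges E A) 3)))

/-- The bipartition `{A, Aᶜ}` is `c`-even-extremal. -/
def EvenExtremalBip (n : ℕ) (E : Finset (Finset (Fin n))) (c : ℝ)
    (A : Finset (Fin n)) : Prop :=
  (n : ℝ)/2 - c*n ≤ (A.card : ℝ) ∧ (A.card : ℝ) ≤ (n : ℝ)/2 + c*n ∧
  ((oddEdges E A).card : ℝ) ≤ c * (n.choose 4 : ℝ)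

/-- The 4-graph `E` is `c`-even-extremal. -/
def EvenExtremal (n : ℕ) (E : Finset (Finset (Fin n))) (c : ℝ) : Prop :=
  ∃ A : Finset (Fin n), EvenExtremalBip n E c A

/-- The bipartition `{A, Aᶜ}` is `c`-odd-extremal. -/
def OddExtremalBip (n : ℕ) (E : Finset (Finset (Fin n))) (c : ℝ)
    (A : Finset (Fin n)) : Prop :=
  (n : ℝ)/2 - c*n ≤ (A.card : ℝ) ∧ (A.card : ℝ) ≤ (n : ℝ)/2 + c*n ∧
  ((evenEdges E A).card : ℝ) ≤ c * (n.choose 4 : ℝ)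

/-- The 4-graph `E` is `c`-odd-extremal. -/
def OddExtremal (n : ℕ) (E : Finset (Finset (Fin n))) (c : ℝ) : Prop :=
  ∃ A : Finset (Fin n), OddExtremalBip n E c A

/-- The number of (vertex-sequence) 2-paths of length `ℓ` in `E` whose ends are the
pairs `p₁` and `p₂`. -/
noncomputable def pathCount (n : ℕ) (E : Finset (Finset (Fin n))) (ℓ : ℕ)
    (p₁ p₂ : Finset (Fin n)) : ℕ :=
  Nat.card {f : Fin (2*ℓ+2) → Fin n //
    IsPath2 n E ℓ (fun i => f ⟨i % (2*ℓ+2), Nat.mod_lt i (by omega)⟩) ∧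
    EndsMatch {f ⟨0, by omega⟩, f ⟨1, by omega⟩}
      {f ⟨2*ℓ, by omega⟩, f ⟨2*ℓ+1, by omega⟩} p₁ p₂}

/-- The 4-graph `E` on `n` vertices is `κ`-connecting. -/
def Connecting (n : ℕ) (E : Finset (Finset (Fin n))) (κ : ℝ) : Prop :=
  ∀ p₁ p₂ : Finset (Fin n), p₁.card = 2 → p₂.card = 2 → Disjoint p₁ p₂ →
    κ * (n : ℝ)^2 ≤ (pathCount n E 2 p₁ p₂ : ℝ) ∨
    κ * (n : ℝ)^4 ≤ (pathCount n E 3 p₁ p₂ : ℝ)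

/-- The ordered octuple `O` is an absorbing structure for the pair `p` in the 4-graph `E`. -/
def AbsorbStruct (n : ℕ) (E : Finset (Finset (Fin n))) (p : Finset (Fin n))
    (O : Fin 8 → Fin n) : Prop :=
  Function.Injective O ∧
  (∃ f : ℕ → Fin n, IsPath2 n E 3 f ∧
      pathVerts n 3 f = Finset.univ.image O ∧
      EndsMatch {f 0, f 1} {f 6, f 7} {O 0, O 1} {O 6, O 7}) ∧
  (∃ f : ℕ → Fin n, IsPath2 n E 4 f ∧
      pathVerts n 4 f = Finset.univ.image O ∪ p ∧
      EndsMatch {f 0, f 1} {f 8, f 9} {O 0, O 1} {O 6, O 7})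

/-- The pair `p` is `β`-absorbable in the 4-graph `E`. -/
def Absorbable (n : ℕ) (E : Finset (Finset (Fin n))) (β : ℝ) (p : Finset (Fin n)) : Prop :=
  β * (n : ℝ)^8 ≤ (Nat.card {O : Fin 8 → Fin n // AbsorbStruct n E p O} : ℝ)

/-- The 4-graph `E` is `(α,β)`-absorbing. -/
def Absorbing (n : ℕ) (E : Finset (Finset (Fin n))) (α β : ℝ) : Prop :=
  (Nat.card {p : Finset (Fin n) // p.card = 2 ∧ ¬ Absorbable n E β p} : ℝ) ≤ α * (n : ℝ)^2

/-- `g 0, …, g (m-1)` is a 2-cycle on `m` vertices in the 4-graph `E`. -/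
def IsCycle2 (n : ℕ) (E : Finset (Finset (Fin n))) (m : ℕ) (g : ℕ → Fin n) : Prop :=
  4 ≤ m ∧ Even m ∧ Set.InjOn g (Set.Iio m) ∧
  ∀ j : ℕ, j < m / 2 →
    ({g ((2*j) % m), g ((2*j+1) % m), g ((2*j+2) % m), g ((2*j+3) % m)} :
      Finset (Fin n)) ∈ E

/-- The vertex set of the 2-cycle on `m` vertices described by `g`. -/
def cycVerts (n m : ℕ) (g : ℕ → Fin n) : Finset (Fin n) :=
  (Finset.range m).image g

/-- The 2-path `f` (of length `ℓ`) is a segment of the 2-cycle `g` (on `m` vertices). -/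
def IsSegment (n m : ℕ) (g : ℕ → Fin n) (ℓ : ℕ) (f : ℕ → Fin n) : Prop :=
  2*ℓ+2 ≤ m ∧ ∃ t : ℕ, Even t ∧ ∀ i < 2*ℓ+2, f i = g ((t + i) % m)

/-- The 2-graph `G` contains a perfect matching on the vertex set `S`. -/
def PerfectMatchingOn (n : ℕ) (G : Finset (Finset (Fin n))) (S : Finset (Fin n)) : Prop :=
  ∃ M ⊆ G, (∀ p ∈ M, ∀ q ∈ M, p ≠ q → Disjoint p q) ∧ M.biUnion id = S

/-- `v` is a `β`-fine vertex of the 4-graph `E` on `n` vertices. -/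
def FineVertex (n : ℕ) (E : Finset (Finset (Fin n))) (β : ℝ) (v : Fin n) : Prop :=
  (1 - β^3) * (n.choose 3 : ℝ) ≤ (deg E {v} : ℝ)

/-- `p` is a `β`-fine pair of the 4-graph `E` on `n` vertices. -/
def FinePair (n : ℕ) (E : Finset (Finset (Fin n))) (β : ℝ) (p : Finset (Fin n)) : Prop :=
  p.card = 2 ∧ (1 - β^2) * (n.choose 2 : ℝ) ≤ (deg E p : ℝ)

/-- `S` is a `β`-fine triple of the 4-graph `E` on `n` vertices. -/
def FineTriple (n : ℕ) (E : Finset (Finset (Fin n))) (β : ℝ) (S : Finset (Fin n)) : Prop :=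
  S.card = 3 ∧ (1 - β) * (n : ℝ) ≤ (deg E S : ℝ)

/-- `v` is a `γ`-good vertex with respect to the edge collection `F` (e.g. the even or
the odd edges of a 4-graph on `n` vertices). -/
def GoodVertexFor (n : ℕ) (F : Finset (Finset (Fin n))) (γ : ℝ) (v : Fin n) : Prop :=
  (1/2 - γ^5) * (n.choose 3 : ℝ) ≤ (deg F {v} : ℝ)

/-- `p` is a `γ`-good pair with respect to the edge collection `F`. -/
def GoodPairFor (n : ℕ) (F : Finset (Finset (Fin n))) (γ : ℝ) (p : Finset (Fin n)) : Prop :=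
  p.card = 2 ∧ (1/2 - γ^3) * (n.choose 2 : ℝ) ≤ (deg F p : ℝ)

/-- `S` is a `γ`-good triple with respect to the edge collection `F`. -/
def GoodTripleFor (n : ℕ) (F : Finset (Finset (Fin n))) (γ : ℝ) (S : Finset (Fin n)) : Prop :=
  S.card = 3 ∧ (1/2 - γ) * (n : ℝ) ≤ (deg F S : ℝ)

/-- `p` is a `β₂`-medium pair with respect to the edge collection `F`. -/
def MediumPairFor (n : ℕ) (F : Finset (Finset (Fin n))) (β₂ : ℝ) (p : Finset (Fin n)) : Prop :=
  p.card = 2 ∧ β₂ * (n.choose 2 : ℝ) ≤ (deg F p : ℝ)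

/-- `v` is a `(β₁,β₂)`-medium vertex w.r.t. the even edges of `(E, A)`:
it lies in at least `β₁ n` pairs that are `β₂`-medium (for the even edges). -/
def MediumVertexE (n : ℕ) (E : Finset (Finset (Fin n))) (A : Finset (Fin n))
    (β₁ β₂ : ℝ) (v : Fin n) : Prop :=
  β₁ * (n : ℝ) ≤
    (Nat.card {p : Finset (Fin n) // v ∈ p ∧ MediumPairFor n (evenEdges E A) β₂ p} : ℝ)

/-- `v` is a `(β₁,β₂)`-medium vertex w.r.t. the odd edges of `(E, A)`:
at least `β₁ n` vertices of `A` and at least `β₁ n` vertices of `Aᶜ` form a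
`β₂`-medium pair with `v` (for the odd edges). -/
def MediumVertexO (n : ℕ) (E : Finset (Finset (Fin n))) (A : Finset (Fin n))
    (β₁ β₂ : ℝ) (v : Fin n) : Prop :=
  β₁ * (n : ℝ) ≤
    (Nat.card {a : Fin n // a ∈ A ∧ MediumPairFor n (oddEdges E A) β₂ {v, a}} : ℝ) ∧
  β₁ * (n : ℝ) ≤
    (Nat.card {b : Fin n // b ∈ Aᶜ ∧ MediumPairFor n (oddEdges E A) β₂ {v, b}} : ℝ)


end HamiltonTwoCycles

open HamiltonTwoCycles

namespace HamiltonTwoCycles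

variable {n : ℕ}

lemma deg_split (E : Finset (Finset (Fin n))) (A S : Finset (Fin n)) :
    deg (evenEdges E A) S + deg (oddEdges E A) S = deg E S := by
  classical
  unfold deg evenEdges oddEdges
  rw [filter_comm (fun e => Even (e ∩ A).card) (fun e => S ⊆ e) E,
    filter_comm (fun e => Odd (e ∩ A).card) (fun e => S ⊆ e) E]
  simp only [← Nat.not_even_iff_odd]
  exact Finset.card_filter_add_card_filter_not (fun e => Even (e ∩ A).card)

lemma sum_deg_insert (F : Finset (Finset (Fin n))) (h4 : ∀ e ∈ F, e.card = 4)
    (S : Finset (Fin n)) :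
    ∑ v ∈ Sᶜ, deg F (insert v S) = (4 - S.card) * deg F S := by
  classical
  unfold deg
  simp only [card_filter]
  rw [Finset.sum_comm]
  rw [Finset.mul_sum]
  refine Finset.sum_congr rfl fun e he => ?_
  by_cases hSe : S ⊆ e
  · have h1 : (Sᶜ.filter fun v => insert v S ⊆ e) = e \ S := by
      ext v
      simp only [mem_filter, mem_compl, mem_sdiff, Finset.insert_subset_iff]
      constructor
      · rintro ⟨hv, hve, -⟩; exact ⟨hve, hv⟩
      · rintro ⟨hve, hv⟩; exact ⟨hv, hve, hSe⟩
    have h2 : ∑ v ∈ Sᶜ, (if insert v S ⊆ e then 1 else 0) =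
        (Sᶜ.filter fun v => insert v S ⊆ e).card := by
      rw [card_filter]
    rw [h2, h1, card_sdiff_of_subset hSe, h4 e he, if_pos hSe, mul_one]
  · have h2 : ∀ v ∈ Sᶜ, (if insert v S ⊆ e then (1:ℕ) else 0) = 0 := by
      intro v hv
      rw [if_neg]
      intro h
      exact hSe ((Finset.subset_insert v S).trans h)
    rw [Finset.sum_congr rfl h2, if_neg hSe, Finset.sum_const_zero, mul_zero]

lemma sum_pairs_deg (F : Finset (Finset (Fin n))) (h4 : ∀ e ∈ F, e.card = 4) :
    ∑ p ∈ Finset.powersetCard 2 (univ : Finset (Fin n)), deg F p = 6 * F.card := by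
  classical
  unfold deg
  simp only [card_filter]
  rw [Finset.sum_comm]
  have : ∀ e ∈ F, ∑ p ∈ Finset.powersetCard 2 (univ : Finset (Fin n)),
      (if p ⊆ e then (1:ℕ) else 0) = 6 := by
    intro e he
    have h1 : ((Finset.powersetCard 2 (univ : Finset (Fin n))).filter fun p => p ⊆ e)
        = e.powersetCard 2 := by
      ext p
      simp only [mem_filter, Finset.mem_powersetCard]
      constructor
      · rintro ⟨⟨-, hc⟩, hpe⟩; exact ⟨hpe, hc⟩
      · rintro ⟨hpe, hc⟩; exact ⟨⟨subset_univ _, hc⟩, hpe⟩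
    rw [← card_filter, h1, Finset.card_powersetCard, h4 e he]
    rfl
  rw [Finset.sum_congr rfl this, Finset.sum_const, smul_eq_mul, mul_comm]

lemma sum_verts_deg (F : Finset (Finset (Fin n))) (h4 : ∀ e ∈ F, e.card = 4) :
    ∑ v : Fin n, deg F {v} = 4 * F.card := by
  classical
  unfold deg
  simp only [card_filter]
  rw [Finset.sum_comm]
  have : ∀ e ∈ F, ∑ v : Fin n, (if {v} ⊆ e then (1:ℕ) else 0) = 4 := by
    intro e he
    simp only [Finset.singleton_subset_iff]
    rw [Finset.sum_ite_mem, Finset.univ_inter, Finset.sum_const, smul_eq_mul, mul_one,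
      h4 e he]
  rw [Finset.sum_congr rfl this, Finset.sum_const, smul_eq_mul, mul_comm]

lemma deg_triple_le (E : Finset (Finset (Fin n))) (h4 : Is4Graph E)
    (S : Finset (Fin n)) (hS : S.card = 3) : deg E S ≤ n := by
  classical
  have hsub : E.filter (fun e => S ⊆ e) ⊆
      (univ : Finset (Fin n)).image (fun w => insert w S) := by
    intro e he
    rw [mem_filter] at he
    obtain ⟨heE, hSe⟩ := he
    have hc : (e \ S).card = 1 := by
      rw [card_sdiff_of_subset hSe, h4 e heE, hS]
    obtain ⟨w, hw⟩ := Finset.card_eq_one.mp hc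
    have hwe : w ∈ e \ S := hw ▸ Finset.mem_singleton_self w
    rw [mem_sdiff] at hwe
    refine Finset.mem_image.mpr ⟨w, Finset.mem_univ w, ?_⟩
    refine Finset.eq_of_subset_of_card_le (Finset.insert_subset hwe.1 hSe) ?_
    rw [h4 e heE, Finset.card_insert_of_notMem hwe.2, hS]
  calc deg E S ≤ ((univ : Finset (Fin n)).image (fun w => insert w S)).card :=
        Finset.card_le_card hsub
    _ ≤ (univ : Finset (Fin n)).card := Finset.card_image_le
    _ = n := Finset.card_univ.trans (Fintype.card_fin n)

lemma nat_card_subtype {α : Type*} [Fintype α] (P : α → Prop) [DecidablePred P] :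
    Nat.card {x // P x} = ((univ : Finset α).filter P).card := by
  simp [Nat.card_eq_fintype_card, Fintype.card_subtype]

end HamiltonTwoCycles


namespace HamiltonTwoCycles
section Arith

set_option maxHeartbeats 1600000 in
lemma arithC {N ε β₁ β₂ U dOd : ℝ}
    (hN : 10 ≤ N) (hεN : 1 ≤ ε*N) (hε : 0 ≤ ε) (hβ₁ : 0 ≤ β₁) (hβ₁' : β₁ ≤ 1/2)
    (hβ₂ : 0 ≤ β₂) (hβ₂' : β₂ ≤ 1/8) (hε' : ε ≤ 1/100)
    (hUc : (1-β₁)*N - 1 ≤ U)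
    (h3 : U * ((N-2)*(N/2-ε*N)/2 - β₂*(N*(N-1)/2)) ≤ 3 * dOd) :
    (1-β₁)*(1/2-β₂-2*ε)*((N-1)*(N-2)*(N-3))/6 ≤ dOd := by
  have hbr : 0 ≤ (1/2-ε)*(N-2) - β₂*(N-1) := by
    nlinarith [mul_nonneg (by linarith : (0:ℝ) ≤ 1/100-ε) (by linarith : (0:ℝ) ≤ N-2),
      mul_nonneg (by linarith : (0:ℝ) ≤ 1/8-β₂) (by linarith : (0:ℝ) ≤ N-1)]
  have ht0 : 0 ≤ (N-2)*(N/2-ε*N)/2 - β₂*(N*(N-1)/2) := by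
    nlinarith [mul_nonneg (by linarith : (0:ℝ) ≤ N) hbr]
  have hcount : 0 ≤ (1-β₁)*N - 1 := by nlinarith
  have hUt : ((1-β₁)*N - 1) * ((N-2)*(N/2-ε*N)/2 - β₂*(N*(N-1)/2)) ≤ 3*dOd :=
    le_trans (mul_le_mul_of_nonneg_right hUc ht0) h3
  have hbr2 : (1/2-β₂-2*ε)*N ≤ (1/2-ε)*(N-2) - β₂*(N-1) := by nlinarith
  have h2t : N*((1/2-β₂-2*ε)*N) ≤ 2*((N-2)*(N/2-ε*N)/2 - β₂*(N*(N-1)/2)) := by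
    nlinarith [mul_le_mul_of_nonneg_left hbr2 (by linarith : (0:ℝ) ≤ N)]
  have hstep1 : ((1-β₁)*N-1) * (N*((1/2-β₂-2*ε)*N)) ≤
      ((1-β₁)*N-1) * (2*((N-2)*(N/2-ε*N)/2 - β₂*(N*(N-1)/2))) :=
    mul_le_mul_of_nonneg_left h2t hcount
  have hD : (0:ℝ) ≤ 1/2-β₂-2*ε := by linarith
  have hbig : (1-β₁)*((N-1)*(N-2)*(N-3)) ≤ ((1-β₁)*N-1)*N^2 := by
    nlinarith [mul_nonneg (by linarith : (0:ℝ) ≤ 1/2-β₁)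
      (by nlinarith : (0:ℝ) ≤ 6*N^2-11*N+6)]
  have hstep2 : (1-β₁)*(1/2-β₂-2*ε)*((N-1)*(N-2)*(N-3)) ≤
      ((1-β₁)*N-1)*(N*((1/2-β₂-2*ε)*N)) := by
    nlinarith [mul_le_mul_of_nonneg_left hbig hD]
  linarith [hstep1, hstep2, hUt]

lemma arithC7 {x b c N : ℝ} (hN : 10 ≤ N) (hc : 0 ≤ c) (hbD : 0 < b)
    (h : x * (b*((N-1)*(N-2)*(N-3))/6) ≤ 4*(c*(N*(N-1)*(N-2)*(N-3)/24))) :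
    x ≤ c/b*N := by
  have hP : (0:ℝ) < (N-1)*(N-2)*(N-3)/6 :=
    div_pos (mul_pos (mul_pos (by linarith) (by linarith)) (by linarith)) (by norm_num)
  have h2 : x*b*((N-1)*(N-2)*(N-3)/6) ≤ (c*N)*((N-1)*(N-2)*(N-3)/6) := by
    nlinarith [mul_nonneg hc (le_of_lt hP)]
  have h3 := le_of_mul_le_mul_right h2 hP
  rw [div_mul_eq_mul_div, le_div_iff₀ hbD]
  linarith

lemma arithD {β N FC BaC RC GC : ℝ} (hN : 10 ≤ N) (hβ : 0 < β)
    (hF : β*(N*(N-1)/2) ≤ FC) (hBa : BaC ≤ (β/50)*(N*(N-1)/2))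
    (hRN : RC*N ≤ β*N*N/3) (h : FC ≤ GC + BaC + RC*N) (hG : GC ≤ 0) : False := by
  have hN0 : (0:ℝ) < N := by linarith
  nlinarith [mul_pos hβ hN0, mul_nonneg (mul_nonneg hβ.le hN0.le) hN0.le]

lemma arithFrac {β γ c ε : ℝ} (hβ : 0 < β) (hγ : 0 < γ) (hγ1 : γ ≤ 1) (hβ1 : β ≤ 1)
    (hc' : c ≤ γ^5*β/100) (hε' : ε ≤ γ^5*β/100) (hγ3ε : 0 < γ^3 - 2*ε) :
    c / (γ^3 - 2*ε) ≤ β/50 := by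
  rw [div_le_iff₀ hγ3ε]
  have h53 : γ^5 ≤ γ^3 := pow_le_pow_of_le_one hγ.le hγ1 (by norm_num)
  have h1 : γ^5*β ≤ γ^3*β := mul_le_mul_of_nonneg_right h53 hβ.le
  have h2 : β*(2*ε) ≤ β*(γ^3/50) := by
    have h2a : 2*ε ≤ γ^3*β/50 := by linarith
    have h3 : γ^3*β ≤ γ^3 := by
      nlinarith [mul_nonneg (pow_nonneg hγ.le 3) (by linarith : (0:ℝ) ≤ 1-β)]
    nlinarith [mul_nonneg hβ.le (pow_nonneg hγ.le 3)]
  linarith [h1, h2, mul_nonneg (pow_nonneg hγ.le 3) hβ.le, hc']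

end Arith
end HamiltonTwoCycles

set_option maxHeartbeats 16000000 in
/-- **Proposition 5.10.** Suppose `1/n ≪ ε, c ≪ γ ≪ β ≪ β₂ ≪ β₁ ≪ 1`, `δ(H) ≥ n/2 - εn`
and `{A, Aᶜ}` is a `c`-even-extremal bipartition. Then (a) few pairs are not `γ`-good,
(b) few vertices are not `γ`-good, (c) few vertices are `(β₁,β₂)`-bad, and (d) every
`β`-medium pair forms an even edge with a `γ`-good pair avoiding any given small set. -/
theorem statement16 :
    ∃ β₁' : ℝ, 0 < β₁' ∧ ∀ β₁ : ℝ, 0 < β₁ → β₁ ≤ β₁' →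
    ∃ β₂' : ℝ, 0 < β₂' ∧ ∀ β₂ : ℝ, 0 < β₂ → β₂ ≤ β₂' →
    ∃ β' : ℝ, 0 < β' ∧ ∀ β : ℝ, 0 < β → β ≤ β' →
    ∃ γ₀ : ℝ, 0 < γ₀ ∧ ∀ γ : ℝ, 0 < γ → γ ≤ γ₀ →
    ∃ η : ℝ, 0 < η ∧ ∀ ε c : ℝ, 0 < ε → ε ≤ η → 0 < c → c ≤ η →
    ∃ n₀ : ℕ, ∀ n : ℕ, n₀ ≤ n →
    ∀ E : Finset (Finset (Fin n)), Is4Graph E →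
      MinCodegGE E ((n : ℝ)/2 - ε * n) →
      ∀ A : Finset (Fin n), EvenExtremalBip n E c A →
      ((Nat.card {p : Finset (Fin n) //
            p.card = 2 ∧ ¬ GoodPairFor n (evenEdges E A) γ p} : ℝ) ≤
          c / (γ^3 - 2*ε) * (n.choose 2 : ℝ)) ∧
      ((Nat.card {v : Fin n // ¬ GoodVertexFor n (evenEdges E A) γ v} : ℝ) ≤
          c / (γ^5 - 2*ε) * n) ∧
      ((Nat.card {v : Fin n // ¬ MediumVertexE n E A β₁ β₂ v} : ℝ) ≤
          c / ((1 - β₁) * (1/2 - β₂ - 2*ε)) * n) ∧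
      (∀ R : Finset (Fin n), (R.card : ℝ) ≤ β * n / 3 →
        ∀ p₁ : Finset (Fin n), MediumPairFor n (evenEdges E A) β p₁ →
          ∃ p₂ : Finset (Fin n), GoodPairFor n (evenEdges E A) γ p₂ ∧
            Disjoint p₂ R ∧ Disjoint p₂ p₁ ∧ p₁ ∪ p₂ ∈ evenEdges E A) := by
  classical
  refine ⟨1/2, by norm_num, fun β₁ hβ₁ hβ₁' => ?_⟩
  refine ⟨1/8, by norm_num, fun β₂ hβ₂ hβ₂' => ?_⟩
  refine ⟨β₂, hβ₂, fun β hβ hβ' => ?_⟩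
  refine ⟨β, hβ, fun γ hγ hγ' => ?_⟩
  refine ⟨γ^5 * β / 100, by positivity, fun ε c hε hε' hc hc' => ?_⟩
  refine ⟨⌈2/ε⌉₊ + 10, fun n hn E h4 hδ A hext => ?_⟩
  obtain ⟨-, -, hodd⟩ := hext
  set N : ℝ := (n : ℝ) with hN
  have hn10 : 10 ≤ n := le_trans (Nat.le_add_left 10 _) hn
  have hN10 : (10:ℝ) ≤ N := by rw [hN]; exact_mod_cast hn10
  have hεN : 2 ≤ ε * N := by
    have h1 : 2/ε ≤ (⌈2/ε⌉₊ : ℝ) := Nat.le_ceil _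
    have h2 : ((⌈2/ε⌉₊ + 10 : ℕ) : ℝ) ≤ N := by rw [hN]; exact_mod_cast hn
    push_cast at h2
    have h3 : 2/ε ≤ N := by linarith
    rw [div_le_iff₀ hε] at h3
    linarith [mul_comm ε N]
  -- basic smallness facts
  have hβ₂8 : β₂ ≤ 1/8 := hβ₂'
  have hβ8 : β ≤ 1/8 := le_trans hβ' hβ₂8
  have hγ8 : γ ≤ 1/8 := le_trans hγ' hβ8
  have hγ1 : γ ≤ 1 := by linarith
  have hγ5_1 : γ^5 ≤ 1 := pow_le_one₀ hγ.le hγ1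
  have hβ1 : β ≤ 1 := by linarith
  have hγ5pos' : (0:ℝ) < γ^5 := by positivity
  have hγ5β : γ^5 * β ≤ γ^5 := by nlinarith
  have hε100 : ε ≤ γ^5/100 := by linarith
  have hc100 : c ≤ γ^5/100 := by linarith
  have hε001 : ε ≤ 1/100 := by linarith
  have hγ5pos : 0 < γ^5 := by positivity
  have hγ3pos : 0 < γ^3 := by positivity
  have hγ53 : γ^5 ≤ γ^3 := pow_le_pow_of_le_one hγ.le hγ1 (by norm_num)
  have hγ5ε : 0 < γ^5 - 2*ε := by linarith
  have hγ3ε : 0 < γ^3 - 2*ε := by linarith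
  -- binomial coefficient identities
  have hkey : ∀ k : ℕ, k ≤ n →
      (n.choose (k+1) : ℝ) * ((k:ℝ)+1) = (n.choose k : ℝ) * (N - k) := by
    intro k hk
    have h := Nat.choose_succ_right_eq n k
    have h2 : ((n.choose (k+1) * (k+1) : ℕ) : ℝ) = ((n.choose k * (n - k) : ℕ) : ℝ) := by
      exact_mod_cast congrArg (fun x : ℕ => (x : ℝ)) h
    push_cast [Nat.cast_sub hk] at h2
    linarith
  have hc1 : (n.choose 1 : ℝ) = N := by rw [Nat.choose_one_right]
  have hc2 : (n.choose 2 : ℝ) = N * (N - 1) / 2 := by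
    have := hkey 1 (by omega)
    rw [hc1] at this
    push_cast at this ⊢
    linarith
  have hc3 : (n.choose 3 : ℝ) = N * (N - 1) * (N - 2) / 6 := by
    have := hkey 2 (by omega)
    rw [hc2] at this
    push_cast at this ⊢
    linarith
  have hc4 : (n.choose 4 : ℝ) = N * (N - 1) * (N - 2) * (N - 3) / 24 := by
    have := hkey 3 (by omega)
    rw [hc3] at this
    push_cast at this ⊢
    linarith
  rw [hc4] at hodd
  -- degree bounds from min codegree
  have hodd4 : ∀ e ∈ oddEdges E A, e.card = 4 := fun e he => h4 e (mem_of_mem_filter e he)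
  have hcompl : ∀ S : Finset (Fin n), (Sᶜ : Finset (Fin n)).card = n - S.card := by
    intro S
    rw [Finset.card_compl, Fintype.card_fin]
  have hpair : ∀ p : Finset (Fin n), p.card = 2 →
      (N - 2) * (N/2 - ε*N) ≤ 2 * (deg E p : ℝ) := by
    intro p hp
    have hs := sum_deg_insert E h4 p
    rw [hp] at hs
    norm_num at hs
    have hcast : ((2 * deg E p : ℕ) : ℝ) = ∑ v ∈ pᶜ, (deg E (insert v p) : ℝ) := by
      rw [← hs]; push_cast; try ring
    have hb : ∀ v ∈ pᶜ, N/2 - ε*N ≤ (deg E (insert v p) : ℝ) := by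
      intro v hv
      refine hδ _ ?_
      rw [Finset.card_insert_of_notMem (by simpa using hv), hp]
    have hcard : ((pᶜ : Finset (Fin n)).card : ℝ) = N - 2 := by
      rw [hcompl p, hp]
      push_cast [Nat.cast_sub (by omega : 2 ≤ n)]
      ring
    calc (N - 2) * (N/2 - ε*N) = ((pᶜ : Finset (Fin n)).card : ℝ) * (N/2 - ε*N) := by
          rw [hcard]
      _ ≤ ∑ v ∈ pᶜ, (deg E (insert v p) : ℝ) := by
          have := Finset.card_nsmul_le_sum pᶜ (fun v => (deg E (insert v p) : ℝ))
            (N/2 - ε*N) hb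
          simpa [nsmul_eq_mul] using this
      _ = 2 * (deg E p : ℝ) := by rw [← hcast]; push_cast; ring
  have hvert : ∀ v : Fin n,
      (N - 1) * ((N - 2) * (N/2 - ε*N)) ≤ 6 * (deg E {v} : ℝ) := by
    intro v
    have hs := sum_deg_insert E h4 {v}
    rw [Finset.card_singleton] at hs
    norm_num at hs
    have hcast : ((3 * deg E {v} : ℕ) : ℝ) = ∑ u ∈ ({v} : Finset (Fin n))ᶜ, (deg E (insert u {v}) : ℝ) := by
      rw [← hs]; push_cast; try ring
    have hb : ∀ u ∈ ({v} : Finset (Fin n))ᶜ,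
        (N - 2) * (N/2 - ε*N) / 2 ≤ (deg E (insert u {v}) : ℝ) := by
      intro u hu
      have hcardp : (insert u {v} : Finset (Fin n)).card = 2 := by
        rw [Finset.card_insert_of_notMem (by simpa using hu), Finset.card_singleton]
      linarith [hpair _ hcardp]
    have hcard : ((({v} : Finset (Fin n))ᶜ).card : ℝ) = N - 1 := by
      rw [hcompl, Finset.card_singleton]
      push_cast [Nat.cast_sub (by omega : 1 ≤ n)]
      ring
    have h1 : (N - 1) * ((N - 2) * (N/2 - ε*N) / 2) ≤ ∑ u ∈ ({v} : Finset (Fin n))ᶜ, (deg E (insert u {v}) : ℝ) := by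
      have := Finset.card_nsmul_le_sum (({v} : Finset (Fin n))ᶜ)
        (fun u => (deg E (insert u {v}) : ℝ)) ((N - 2) * (N/2 - ε*N) / 2) hb
      rw [nsmul_eq_mul, hcard] at this
      exact this
    have h2 : ∑ u ∈ ({v} : Finset (Fin n))ᶜ, (deg E (insert u {v}) : ℝ) = 3 * (deg E {v} : ℝ) := by
      rw [← hcast]; push_cast; ring
    linarith
  -- odd degree lower bound for bad pairs
  have hbadpair : ∀ p : Finset (Fin n), p.card = 2 →
      ¬ GoodPairFor n (evenEdges E A) γ p →
      (γ^3 - 2*ε) * (N * (N-1) / 2) ≤ (deg (oddEdges E A) p : ℝ) := by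
    intro p hp hng
    have hlt : (deg (evenEdges E A) p : ℝ) < (1/2 - γ^3) * (N * (N-1) / 2) := by
      by_contra h
      exact hng ⟨hp, by rw [hc2]; linarith⟩
    have hsplit : (deg (evenEdges E A) p : ℝ) + (deg (oddEdges E A) p : ℝ) = (deg E p : ℝ) := by
      exact_mod_cast congrArg (fun x : ℕ => (x : ℝ)) (deg_split E A p)
    have hEp := hpair p hp
    have hNε : 0 ≤ N * (ε * N - 2) :=
      mul_nonneg (by linarith) (by linarith)
    nlinarith
  -- PART (a)
  set Ba := (univ : Finset (Finset (Fin n))).filter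
    (fun p => p.card = 2 ∧ ¬ GoodPairFor n (evenEdges E A) γ p) with hBa_def
  have parta : (Ba.card : ℝ) ≤ c / (γ^3 - 2*ε) * (n.choose 2 : ℝ) := by
    have hsub : Ba ⊆ Finset.powersetCard 2 (univ : Finset (Fin n)) := by
      intro p hp
      rw [hBa_def, mem_filter] at hp
      exact Finset.mem_powersetCard.mpr ⟨subset_univ _, hp.2.1⟩
    have hsum1 : ∑ p ∈ Ba, deg (oddEdges E A) p ≤ 6 * (oddEdges E A).card := by
      calc ∑ p ∈ Ba, deg (oddEdges E A) p
          ≤ ∑ p ∈ Finset.powersetCard 2 (univ : Finset (Fin n)), deg (oddEdges E A) p :=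
            Finset.sum_le_sum_of_subset hsub
        _ = 6 * (oddEdges E A).card := sum_pairs_deg _ hodd4
    have hlow : (Ba.card : ℝ) * ((γ^3 - 2*ε) * (N * (N-1) / 2)) ≤
        ∑ p ∈ Ba, (deg (oddEdges E A) p : ℝ) := by
      have := Finset.card_nsmul_le_sum Ba (fun p => (deg (oddEdges E A) p : ℝ))
        ((γ^3 - 2*ε) * (N * (N-1) / 2)) (fun p hp => by
          rw [hBa_def, mem_filter] at hp
          exact hbadpair p hp.2.1 hp.2.2)
      simpa [nsmul_eq_mul] using this
    have hsum2 : ∑ p ∈ Ba, (deg (oddEdges E A) p : ℝ) ≤ 6 * ((oddEdges E A).card : ℝ) := by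
      rw [← Nat.cast_sum]
      exact_mod_cast hsum1
    have hmain : (Ba.card : ℝ) * ((γ^3 - 2*ε) * (N * (N-1) / 2)) ≤
        6 * (c * (N * (N - 1) * (N - 2) * (N - 3) / 24)) := by
      calc (Ba.card : ℝ) * ((γ^3 - 2*ε) * (N * (N-1) / 2))
          ≤ ∑ p ∈ Ba, (deg (oddEdges E A) p : ℝ) := hlow
        _ ≤ 6 * ((oddEdges E A).card : ℝ) := hsum2
        _ ≤ 6 * (c * (N * (N - 1) * (N - 2) * (N - 3) / 24)) := by linarith
    have hC2pos : (0:ℝ) < N * (N-1) / 2 := by nlinarith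
    have hfinal : (Ba.card : ℝ) * (γ^3 - 2*ε) ≤ c * (N * (N-1) / 2) := by
      have h6 : 6 * (c * (N * (N - 1) * (N - 2) * (N - 3) / 24)) ≤
          c * ((N * (N-1) / 2) * (N * (N-1) / 2)) := by nlinarith
      have := le_trans hmain h6
      have h7 : (Ba.card : ℝ) * (γ^3 - 2*ε) * (N * (N-1) / 2) ≤
          c * (N * (N-1) / 2) * (N * (N-1) / 2) := by nlinarith
      exact le_of_mul_le_mul_right h7 hC2pos
    rw [hc2, div_mul_eq_mul_div, le_div_iff₀ hγ3ε]
    linarith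
  -- PART (b)
  have hbadvert : ∀ v : Fin n, ¬ GoodVertexFor n (evenEdges E A) γ v →
      (γ^5 - 2*ε) * (N*(N-1)*(N-2)/6) ≤ (deg (oddEdges E A) {v} : ℝ) := by
    intro v hng
    rw [GoodVertexFor, hc3, not_le] at hng
    have hsplit : (deg (evenEdges E A) {v} : ℝ) + (deg (oddEdges E A) {v} : ℝ)
        = (deg E {v} : ℝ) := by
      exact_mod_cast congrArg (fun x : ℕ => (x : ℝ)) (deg_split E A {v})
    have hEv := hvert v
    have hP : (0:ℝ) ≤ N * (N-1) * (N-2) :=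
      mul_nonneg (mul_nonneg (by linarith) (by linarith)) (by linarith)
    nlinarith [mul_nonneg hε.le hP]
  set Bb := (univ : Finset (Fin n)).filter
    (fun v => ¬ GoodVertexFor n (evenEdges E A) γ v) with hBb_def
  have partb : (Bb.card : ℝ) ≤ c / (γ^5 - 2*ε) * N := by
    have hsum1 : ∑ v ∈ Bb, deg (oddEdges E A) {v} ≤ 4 * (oddEdges E A).card := by
      calc ∑ v ∈ Bb, deg (oddEdges E A) {v}
          ≤ ∑ v : Fin n, deg (oddEdges E A) {v} :=
            Finset.sum_le_sum_of_subset (subset_univ _)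
        _ = 4 * (oddEdges E A).card := sum_verts_deg _ hodd4
    have hlow : (Bb.card : ℝ) * ((γ^5 - 2*ε) * (N*(N-1)*(N-2)/6)) ≤
        ∑ v ∈ Bb, (deg (oddEdges E A) {v} : ℝ) := by
      have := Finset.card_nsmul_le_sum Bb (fun v => (deg (oddEdges E A) {v} : ℝ))
        ((γ^5 - 2*ε) * (N*(N-1)*(N-2)/6)) (fun v hv => by
          rw [hBb_def, mem_filter] at hv
          exact hbadvert v hv.2)
      simpa [nsmul_eq_mul] using this
    have hsum2 : ∑ v ∈ Bb, (deg (oddEdges E A) {v} : ℝ) ≤ 4 * ((oddEdges E A).card : ℝ) := by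
      rw [← Nat.cast_sum]
      exact_mod_cast hsum1
    have hP : (0:ℝ) ≤ N * (N-1) * (N-2) :=
      mul_nonneg (mul_nonneg (by linarith) (by linarith)) (by linarith)
    have hXpos : (0:ℝ) < N*(N-1)*(N-2)/6 := by nlinarith
    have h7 : (Bb.card : ℝ) * (γ^5 - 2*ε) * (N*(N-1)*(N-2)/6) ≤
        (c * N) * (N*(N-1)*(N-2)/6) := by
      nlinarith [mul_nonneg hc.le hP]
    have h8 : (Bb.card : ℝ) * (γ^5 - 2*ε) ≤ c * N := le_of_mul_le_mul_right h7 hXpos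
    rw [div_mul_eq_mul_div, le_div_iff₀ hγ5ε]
    linarith
  -- PART (c)
  have hDpos : (0:ℝ) < 1/2 - β₂ - 2*ε := by linarith
  have hb₁pos : (0:ℝ) < 1 - β₁ := by linarith
  have hbadvertc : ∀ v : Fin n, ¬ MediumVertexE n E A β₁ β₂ v →
      (1 - β₁) * (1/2 - β₂ - 2*ε) * ((N-1)*(N-2)*(N-3)) / 6 ≤
        (deg (oddEdges E A) {v} : ℝ) := by
    intro v hng
    rw [MediumVertexE, not_le, nat_card_subtype] at hng
    set med := (({v} : Finset (Fin n))ᶜ).filter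
      (fun u => MediumPairFor n (evenEdges E A) β₂ (insert u {v})) with hmed_def
    set U := (({v} : Finset (Fin n))ᶜ).filter
      (fun u => ¬ MediumPairFor n (evenEdges E A) β₂ (insert u {v})) with hU_def
    have hsplitc : med.card + U.card = n - 1 := by
      rw [hmed_def, hU_def, Finset.card_filter_add_card_filter_not, hcompl,
        Finset.card_singleton]
    have hinj : med.card ≤ ((univ : Finset (Finset (Fin n))).filter
        (fun p => v ∈ p ∧ MediumPairFor n (evenEdges E A) β₂ p)).card := by
      refine Finset.card_le_card_of_injOn (fun u => insert u {v}) ?_ ?_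
      · intro u hu
        rw [hmed_def, Finset.mem_coe, mem_filter] at hu
        rw [Finset.mem_coe, mem_filter]
        exact ⟨mem_univ _, Finset.mem_insert_of_mem (Finset.mem_singleton_self v), hu.2⟩
      · intro u hu u' hu' h
        have h' : insert u ({v} : Finset (Fin n)) = insert u' {v} := h
        have h1 : u ∈ insert u' ({v} : Finset (Fin n)) := by
          rw [← h']; exact Finset.mem_insert_self u {v}
        rcases Finset.mem_insert.mp h1 with h2 | h2
        · exact h2
        · exfalso
          rw [hmed_def, Finset.coe_filter, Set.mem_setOf_eq] at hu
          have := hu.1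
          rw [Finset.mem_compl, Finset.mem_singleton] at this
          exact this (Finset.mem_singleton.mp h2)
    have hsplitR : (med.card : ℝ) + (U.card : ℝ) = N - 1 := by
      have h1 : ((med.card + U.card : ℕ) : ℝ) = ((n - 1 : ℕ) : ℝ) := by
        exact_mod_cast congrArg (fun x : ℕ => (x : ℝ)) hsplitc
      push_cast [Nat.cast_sub (by omega : 1 ≤ n)] at h1
      linarith
    have hUcard : (1 - β₁) * N - 1 ≤ (U.card : ℝ) := by
      have hmedlt : (med.card : ℝ) < β₁ * N := lt_of_le_of_lt (by exact_mod_cast hinj) hng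
      linarith
    have hU : ∀ u ∈ U, (N-2)*(N/2-ε*N)/2 - β₂*(N*(N-1)/2) ≤
        (deg (oddEdges E A) (insert u {v}) : ℝ) := by
      intro u hu
      rw [hU_def, mem_filter] at hu
      obtain ⟨huc, hnm⟩ := hu
      have hcard2 : (insert u ({v} : Finset (Fin n))).card = 2 := by
        rw [Finset.card_insert_of_notMem (by simpa using huc), Finset.card_singleton]
      have hlt : (deg (evenEdges E A) (insert u {v}) : ℝ) < β₂ * (N*(N-1)/2) := by
        by_contra h
        exact hnm ⟨hcard2, by rw [hc2]; linarith⟩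
      have hsplit : (deg (evenEdges E A) (insert u {v}) : ℝ) +
          (deg (oddEdges E A) (insert u {v}) : ℝ) = (deg E (insert u {v}) : ℝ) := by
        exact_mod_cast congrArg (fun x : ℕ => (x : ℝ)) (deg_split E A (insert u {v}))
      have := hpair _ hcard2
      linarith
    have ht0 : (0:ℝ) ≤ (N-2)*(N/2-ε*N)/2 - β₂*(N*(N-1)/2) := by
      nlinarith [mul_nonneg hβ₂.le (by linarith : (0:ℝ) ≤ N - 1),
        mul_nonneg hε.le (by linarith : (0:ℝ) ≤ N - 2)]
    have h3 : (U.card : ℝ) * ((N-2)*(N/2-ε*N)/2 - β₂*(N*(N-1)/2)) ≤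
        3 * (deg (oddEdges E A) {v} : ℝ) := by
      have hs := sum_deg_insert (oddEdges E A) hodd4 {v}
      rw [Finset.card_singleton] at hs
      norm_num at hs
      have hcast : ∑ u ∈ (({v} : Finset (Fin n))ᶜ), (deg (oddEdges E A) (insert u {v}) : ℝ)
          = 3 * (deg (oddEdges E A) {v} : ℝ) := by
        rw [← Nat.cast_sum, hs]; push_cast; ring
      have h1 : (U.card : ℝ) * ((N-2)*(N/2-ε*N)/2 - β₂*(N*(N-1)/2)) ≤
          ∑ u ∈ U, (deg (oddEdges E A) (insert u {v}) : ℝ) := by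
        have := Finset.card_nsmul_le_sum U
          (fun u => (deg (oddEdges E A) (insert u {v}) : ℝ))
          ((N-2)*(N/2-ε*N)/2 - β₂*(N*(N-1)/2)) hU
        simpa [nsmul_eq_mul] using this
      have h2 : ∑ u ∈ U, (deg (oddEdges E A) (insert u {v}) : ℝ) ≤
          ∑ u ∈ (({v} : Finset (Fin n))ᶜ), (deg (oddEdges E A) (insert u {v}) : ℝ) := by
        refine Finset.sum_le_sum_of_subset_of_nonneg (Finset.filter_subset _ _) ?_
        intro u _ _
        positivity
      linarith
    exact arithC hN10 (by linarith) hε.le hβ₁.le hβ₁' hβ₂.le hβ₂8 hε001 hUcard h3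
  set Bc := (univ : Finset (Fin n)).filter
    (fun v => ¬ MediumVertexE n E A β₁ β₂ v) with hBc_def
  have partc : (Bc.card : ℝ) ≤ c / ((1 - β₁) * (1/2 - β₂ - 2*ε)) * N := by
    have hsum1 : ∑ v ∈ Bc, deg (oddEdges E A) {v} ≤ 4 * (oddEdges E A).card := by
      calc ∑ v ∈ Bc, deg (oddEdges E A) {v}
          ≤ ∑ v : Fin n, deg (oddEdges E A) {v} :=
            Finset.sum_le_sum_of_subset (subset_univ _)
        _ = 4 * (oddEdges E A).card := sum_verts_deg _ hodd4
    have hlow : (Bc.card : ℝ) * ((1 - β₁) * (1/2 - β₂ - 2*ε) * ((N-1)*(N-2)*(N-3)) / 6) ≤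
        ∑ v ∈ Bc, (deg (oddEdges E A) {v} : ℝ) := by
      have := Finset.card_nsmul_le_sum Bc (fun v => (deg (oddEdges E A) {v} : ℝ))
        ((1 - β₁) * (1/2 - β₂ - 2*ε) * ((N-1)*(N-2)*(N-3)) / 6) (fun v hv => by
          rw [hBc_def, mem_filter] at hv
          exact hbadvertc v hv.2)
      simpa [nsmul_eq_mul] using this
    have hsum2 : ∑ v ∈ Bc, (deg (oddEdges E A) {v} : ℝ) ≤ 4 * ((oddEdges E A).card : ℝ) := by
      rw [← Nat.cast_sum]
      exact_mod_cast hsum1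
    refine arithC7 hN10 hc.le (mul_pos hb₁pos hDpos) (le_trans (le_trans (le_of_eq ?_) hlow) (le_trans hsum2 (by linarith)))
    ring
  -- PART (d)
  have partd : ∀ R : Finset (Fin n), (R.card : ℝ) ≤ β * N / 3 →
      ∀ p₁ : Finset (Fin n), MediumPairFor n (evenEdges E A) β p₁ →
      ∃ p₂ : Finset (Fin n), GoodPairFor n (evenEdges E A) γ p₂ ∧
        Disjoint p₂ R ∧ Disjoint p₂ p₁ ∧ p₁ ∪ p₂ ∈ evenEdges E A := by
    intro R hR p₁ hp₁
    obtain ⟨hp₁c, hp₁deg⟩ := hp₁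
    set F := (evenEdges E A).filter (fun e => p₁ ⊆ e) with hF_def
    have hFcard : deg (evenEdges E A) p₁ = F.card := rfl
    set G := F.filter (fun e => GoodPairFor n (evenEdges E A) γ (e \ p₁) ∧
      Disjoint (e \ p₁) R) with hG_def
    have hFsplit : G.card + (F.filter (fun e => ¬(GoodPairFor n (evenEdges E A) γ (e \ p₁) ∧
        Disjoint (e \ p₁) R))).card = F.card := by
      rw [hG_def]
      exact Finset.card_filter_add_card_filter_not _
    have hBadsub : F.filter (fun e => ¬(GoodPairFor n (evenEdges E A) γ (e \ p₁) ∧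
        Disjoint (e \ p₁) R)) ⊆
        F.filter (fun e => ¬ GoodPairFor n (evenEdges E A) γ (e \ p₁)) ∪
        F.filter (fun e => ¬ Disjoint (e \ p₁) R) := by
      intro e he
      have he' := Finset.mem_filter.mp he
      rcases not_and_or.mp he'.2 with h | h
      · exact Finset.mem_union_left _ (Finset.mem_filter.mpr ⟨he'.1, h⟩)
      · exact Finset.mem_union_right _ (Finset.mem_filter.mpr ⟨he'.1, h⟩)
    have hmemF : ∀ e ∈ F, e ∈ E ∧ p₁ ⊆ e ∧ (e \ p₁).card = 2 := by
      intro e he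
      rw [hF_def, mem_filter] at he
      have heE : e ∈ E := mem_of_mem_filter e he.1
      refine ⟨heE, he.2, ?_⟩
      rw [card_sdiff_of_subset he.2, h4 e heE, hp₁c]
    have hcard1 : (F.filter (fun e => ¬ GoodPairFor n (evenEdges E A) γ (e \ p₁))).card ≤
        Ba.card := by
      refine Finset.card_le_card_of_injOn (fun e => e \ p₁) ?_ ?_
      · intro e he
        have he' := Finset.mem_filter.mp he
        obtain ⟨h1, h2, h3⟩ := hmemF e he'.1
        rw [hBa_def]
        exact Finset.mem_filter.mpr ⟨mem_univ _, h3, he'.2⟩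
      · intro e he e' he' h
        simp only [Finset.coe_filter, Set.mem_setOf_eq] at he he'
        obtain ⟨-, hsub, -⟩ := hmemF e he.1
        obtain ⟨-, hsub', -⟩ := hmemF e' he'.1
        have h1 : p₁ ∪ (e \ p₁) = e := Finset.union_sdiff_of_subset hsub
        have h2 : p₁ ∪ (e' \ p₁) = e' := Finset.union_sdiff_of_subset hsub'
        have h' : e \ p₁ = e' \ p₁ := h
        rw [← h1, ← h2, h']
    have hcard2 : (F.filter (fun e => ¬ Disjoint (e \ p₁) R)).card ≤ R.card * n := by
      have hsub2 : F.filter (fun e => ¬ Disjoint (e \ p₁) R) ⊆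
          R.biUnion (fun x => F.filter (fun e => x ∈ e ∧ x ∉ p₁)) := by
        intro e he
        have he' := Finset.mem_filter.mp he
        obtain ⟨x, hx1, hx2⟩ := Finset.not_disjoint_iff.mp he'.2
        rw [mem_sdiff] at hx1
        exact Finset.mem_biUnion.mpr ⟨x, hx2,
          Finset.mem_filter.mpr ⟨he'.1, hx1.1, hx1.2⟩⟩
      calc (F.filter (fun e => ¬ Disjoint (e \ p₁) R)).card
          ≤ (R.biUnion (fun x => F.filter (fun e => x ∈ e ∧ x ∉ p₁))).card :=
            Finset.card_le_card hsub2
        _ ≤ ∑ x ∈ R, (F.filter (fun e => x ∈ e ∧ x ∉ p₁)).card := Finset.card_biUnion_le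
        _ ≤ ∑ x ∈ R, n := by
            refine Finset.sum_le_sum fun x hx => ?_
            by_cases hxp : x ∈ p₁
            · have hempty : F.filter (fun e => x ∈ e ∧ x ∉ p₁) = ∅ := by
                refine Finset.filter_false_of_mem ?_
                intro e _
                simp [hxp]
              rw [hempty]
              simp
            · have hsub3 : F.filter (fun e => x ∈ e ∧ x ∉ p₁) ⊆
                  E.filter (fun e => insert x p₁ ⊆ e) := by
                intro e he
                have he' := Finset.mem_filter.mp he
                obtain ⟨h1, h2, -⟩ := hmemF e he'.1
                exact Finset.mem_filter.mpr ⟨h1, Finset.insert_subset he'.2.1 h2⟩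
              calc (F.filter (fun e => x ∈ e ∧ x ∉ p₁)).card
                  ≤ (E.filter (fun e => insert x p₁ ⊆ e)).card := Finset.card_le_card hsub3
                _ = deg E (insert x p₁) := rfl
                _ ≤ n := deg_triple_le E h4 _
                    (by rw [Finset.card_insert_of_notMem hxp, hp₁c])
        _ = R.card * n := by rw [Finset.sum_const, smul_eq_mul]
    -- real arithmetic: G is nonempty
    have hGne : G.Nonempty := by
      rw [← Finset.card_pos]
      by_contra hg
      push_neg at hg
      have hG0 : ((G.card : ℝ)) ≤ 0 := by
        have : G.card = 0 := by omega
        rw [this]; norm_num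
      have hFlow : β * (N*(N-1)/2) ≤ (F.card : ℝ) := by
        rw [← hFcard]
        rw [hc2] at hp₁deg
        exact hp₁deg
      have hfrac : c / (γ^3 - 2*ε) ≤ β/50 := arithFrac hβ hγ hγ1 hβ1 hc' hε' hγ3ε
      have hBa_bound : (Ba.card : ℝ) ≤ (β/50) * (N*(N-1)/2) := by
        have h1 : c / (γ^3-2*ε) * ((n.choose 2 : ℕ) : ℝ) ≤ β/50 * ((n.choose 2 : ℕ) : ℝ) := by
          refine mul_le_mul_of_nonneg_right hfrac ?_
          positivity
        have h2 := le_trans parta h1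
        rw [hc2] at h2
        exact h2
      have hcast : (F.card : ℝ) ≤ (G.card : ℝ) + (Ba.card : ℝ) + (R.card : ℝ) * N := by
        have h1 : F.card ≤ G.card + (Ba.card + R.card * n) := by
          have h2 := Finset.card_le_card hBadsub
          have h3 := Finset.card_union_le
            (F.filter (fun e => ¬ GoodPairFor n (evenEdges E A) γ (e \ p₁)))
            (F.filter (fun e => ¬ Disjoint (e \ p₁) R))
          omega
        have h4' : ((F.card : ℕ) : ℝ) ≤ ((G.card + (Ba.card + R.card * n) : ℕ) : ℝ) := by
          exact_mod_cast h1
        push_cast at h4'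
        rw [hN]
        linarith
      have hRN : (R.card : ℝ) * N ≤ β * N * N / 3 := by
        have hN0 : (0:ℝ) ≤ N := by linarith
        have := mul_le_mul_of_nonneg_right hR hN0
        linarith
      exact arithD hN10 hβ hFlow hBa_bound hRN (by linarith) hG0
    obtain ⟨e, he⟩ := hGne
    rw [hG_def, mem_filter] at he
    obtain ⟨heF, hgood, hdisR⟩ := he
    obtain ⟨-, hsub, -⟩ := hmemF e heF
    have heE : e ∈ evenEdges E A := by
      rw [hF_def, mem_filter] at heF
      exact heF.1
    refine ⟨e \ p₁, hgood, hdisR, Finset.sdiff_disjoint, ?_⟩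
    rw [Finset.union_sdiff_of_subset hsub]
    exact heE
  -- ASSEMBLE
  refine ⟨?_, ?_, ?_, ?_⟩
  · rw [nat_card_subtype]
    exact parta
  · rw [nat_card_subtype]
    exact partb
  · rw [nat_card_subtype]
    exact partc
  · exact partd
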